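/- (Theorem 1, known wind velocity.) Let k ≥ 0, assume 0 ≤ S(x,t) ≤ S₀(x) for all x ∈ W and t ≥ 0, assume Assumption 1, namely α > 0, and assume the feedback boundary condition ∂T/∂n(x,t) = [ (n(x)·v(x,t) − 2k)/(2ε) − 2R₂/R₁ ]·(T(x,t) − T_a) holds for all x ∈ ∂W and t > 0. Then for every t ≥ 0: ∫_W (T(x,t) − T_a)² dx ≤ exp(−α·t)·∫_W (T₀(x) − T_a)² dx. -/

import Mathlib

open Set MeasureTheory intervalIntegral

set_option maxHeartbeats 1000000

/-- The shifted Arrhenius reaction-rate function with activation parameter `γ`. -/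
noncomputable def rt (γ s : ℝ) : ℝ := if 0 < s then Real.exp (-γ / s) else 0

/-- The four-edge boundary integral `∫_{∂W} g dσ` over the boundary of the
rectangle `[a₁,b₁]×[a₂,b₂]`. -/
noncomputable def bInt (a₁ b₁ a₂ b₂ : ℝ) (g : ℝ → ℝ → ℝ) : ℝ :=
  (∫ y in a₂..b₂, g a₁ y) + (∫ y in a₂..b₂, g b₁ y) +
  (∫ x in a₁..b₁, g x a₂) + (∫ x in a₁..b₁, g x b₂)

open Function Filter

lemma my_swap {f : ℝ → ℝ → ℝ} (hf : Continuous (uncurry f)) {a₁ b₁ a₂ b₂ : ℝ}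
    (h₁ : a₁ ≤ b₁) (h₂ : a₂ ≤ b₂) :
    (∫ x in a₁..b₁, ∫ y in a₂..b₂, f x y) = ∫ y in a₂..b₂, ∫ x in a₁..b₁, f x y := by
  rw [intervalIntegral.integral_of_le h₁, intervalIntegral.integral_of_le h₂]
  simp_rw [intervalIntegral.integral_of_le h₂, intervalIntegral.integral_of_le h₁]
  apply MeasureTheory.integral_integral_swap
  rw [Measure.prod_restrict]
  have : IntegrableOn (uncurry f) (Icc a₁ b₁ ×ˢ Icc a₂ b₂) (volume.prod volume) := by
    rw [← Measure.volume_eq_prod]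
    exact hf.continuousOn.integrableOn_compact (isCompact_Icc.prod isCompact_Icc)
  exact this.mono_set (Set.prod_mono Set.Ioc_subset_Icc_self Set.Ioc_subset_Icc_self)

lemma my_param_cont {X : Type*} [TopologicalSpace X] {f : X → ℝ → ℝ}
    (hf : Continuous (uncurry f)) (a₂ b₂ : ℝ) :
    Continuous fun x => ∫ y in a₂..b₂, f x y :=
  intervalIntegral.continuous_parametric_intervalIntegral_of_continuous' hf a₂ b₂

lemma my_gronwall {f f' : ℝ → ℝ} {α : ℝ} (hc : ContinuousOn f (Ici 0))
    (hd : ∀ t, 0 < t → HasDerivAt f (f' t) t)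
    (hb : ∀ t, 0 < t → f' t ≤ -α * f t) :
    ∀ t, 0 ≤ t → f t ≤ Real.exp (-α * t) * f 0 := by
  intro t ht
  rcases eq_or_lt_of_le ht with h | htpos
  · simp [← h]
  have key : ∀ s, 0 < s → s ≤ t → f t ≤ f s * Real.exp (-α * (t - s)) := by
    intro s hs hst
    have H := le_gronwallBound_of_liminf_deriv_right_le (f := f) (f' := f')
      (δ := f s) (K := -α) (ε := 0) (a := s) (b := t)
      (hc.mono (fun z hz => le_trans hs.le hz.1))
      (fun x hx r hr =>
        ((hd x (lt_of_lt_of_le hs hx.1)).hasDerivWithinAt.liminf_right_slope_le hr))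
      le_rfl
      (fun x hx => by simpa using hb x (lt_of_lt_of_le hs hx.1))
    have := H t (right_mem_Icc.2 hst)
    rwa [gronwallBound_ε0] at this
  have hcont0 : Tendsto f (nhdsWithin 0 (Ioi 0)) (nhds (f 0)) :=
    ((hc 0 self_mem_Ici).tendsto).mono_left (nhdsWithin_mono 0 Ioi_subset_Ici_self)
  have hexp : Tendsto (fun s : ℝ => Real.exp (-α * (t - s))) (nhdsWithin 0 (Ioi 0))
      (nhds (Real.exp (-α * t))) := by
    have hcexp : Continuous fun s : ℝ => Real.exp (-α * (t - s)) := by continuity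
    have := (hcexp.tendsto 0).mono_left (nhdsWithin_le_nhds (s := Ioi (0:ℝ)))
    simpa using this
  have htends : Tendsto (fun s => f s * Real.exp (-α * (t - s))) (nhdsWithin 0 (Ioi 0))
      (nhds (Real.exp (-α * t) * f 0)) := by
    simpa [mul_comm] using hcont0.mul hexp
  have hev : ∀ᶠ s in nhdsWithin 0 (Ioi 0), f t ≤ f s * Real.exp (-α * (t - s)) := by
    filter_upwards [Ioo_mem_nhdsGT_of_mem (Set.mem_Ico.2 ⟨le_refl (0:ℝ), htpos⟩)] with s hs
    exact key s hs.1 hs.2.le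
  exact ge_of_tendsto htends hev

lemma rt_mul_le {γ M S u : ℝ} (hγ : 0 < γ) (hS0 : 0 ≤ S) (hSM : S ≤ M) (hM : 0 ≤ M) :
    S * rt γ u * u ≤ M * Real.exp (-1) / γ * u ^ 2 := by
  by_cases h : 0 < u
  · simp only [rt, if_pos h]
    have hrt : Real.exp (-γ / u) ≤ u * Real.exp (-1) / γ := by
      have hx : γ / u ≤ Real.exp (γ / u - 1) := by
        have := Real.add_one_le_exp (γ / u - 1); linarith
      rw [Real.exp_sub] at hx
      have h2 : γ / u * Real.exp 1 ≤ Real.exp (γ / u) := (le_div_iff₀ (Real.exp_pos 1)).mp hx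
      have h3 : 0 < γ / u * Real.exp 1 := by positivity
      rw [neg_div, Real.exp_neg]
      calc (Real.exp (γ / u))⁻¹ ≤ (γ / u * Real.exp 1)⁻¹ := by
            exact inv_anti₀ h3 h2
        _ = u * Real.exp (-1) / γ := by
            rw [Real.exp_neg]; field_simp
    have hstep : S * Real.exp (-γ / u) ≤ M * (u * Real.exp (-1) / γ) :=
      mul_le_mul hSM hrt (le_of_lt (Real.exp_pos _)) hM
    calc S * Real.exp (-γ / u) * u ≤ M * (u * Real.exp (-1) / γ) * u :=
          mul_le_mul_of_nonneg_right hstep h.le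
      _ = M * Real.exp (-1) / γ * u ^ 2 := by ring
  · simp only [rt, if_neg h]
    have h2 : 0 ≤ M * Real.exp (-1) / γ * u ^ 2 := by positivity
    linarith
/-- Energy decay estimate for the wildfire model on the rectangle `W = [a₁,b₁]×[a₂,b₂]`
under the feedback boundary control `∂T/∂n = ((n·v − 2k)/(2ε) − 2R₂/R₁)·(T − T_a)`:
if Assumption 1 holds (`α > 0`), then for every `t ≥ 0`,
`∫_W (T(x,t) − T_a)² dx ≤ exp(−α·t)·∫_W (T₀(x) − T_a)² dx` (Theorem 1). -/
theorem stmt10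
    (a₁ b₁ a₂ b₂ ε A C γ Ta CS : ℝ)
    (ha : a₁ < b₁) (hb : a₂ < b₂)
    (hε : 0 < ε) (hA : 0 < A) (hC : 0 < C) (hγ : 0 < γ) (hTa : 0 < Ta) (hCS : 0 ≤ CS)
    (W bW : Set (ℝ × ℝ))
    (hW : W = Icc a₁ b₁ ×ˢ Icc a₂ b₂)
    (hbW : bW = (({a₁, b₁} : Set ℝ) ×ˢ Icc a₂ b₂) ∪ (Icc a₁ b₁ ×ˢ ({a₂, b₂} : Set ℝ)))
    (T S v₁ v₂ T₁ T₂ T₁₁ T₂₂ Tt dv₁ dv₂ : ℝ → ℝ → ℝ → ℝ)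
    (T₀ S₀ : ℝ → ℝ → ℝ)
    -- spatial and temporal derivatives of T and spatial derivatives of v
    (hT₁ : ∀ x y t, 0 ≤ t → HasDerivAt (fun s => T s y t) (T₁ x y t) x)
    (hT₂ : ∀ x y t, 0 ≤ t → HasDerivAt (fun s => T x s t) (T₂ x y t) y)
    (hT₁₁ : ∀ x y t, 0 ≤ t → HasDerivAt (fun s => T₁ s y t) (T₁₁ x y t) x)
    (hT₂₂ : ∀ x y t, 0 ≤ t → HasDerivAt (fun s => T₂ x s t) (T₂₂ x y t) y)
    (hTt : ∀ x y t, 0 < t → HasDerivAt (fun τ => T x y τ) (Tt x y t) t)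
    (hdv₁ : ∀ x y t, 0 ≤ t → HasDerivAt (fun s => v₁ s y t) (dv₁ x y t) x)
    (hdv₂ : ∀ x y t, 0 ≤ t → HasDerivAt (fun s => v₂ x s t) (dv₂ x y t) y)
    -- joint continuity on W × [0,∞) of T, S, v and all the above derivatives
    (hcont : ∀ f ∈ [T, S, v₁, v₂, T₁, T₂, T₁₁, T₂₂, Tt, dv₁, dv₂],
      ContinuousOn (fun q : (ℝ × ℝ) × ℝ => f q.1.1 q.1.2 q.2) (W ×ˢ Ici (0 : ℝ)))
    -- the PDEs on W × (0,∞)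
    (hPDE : ∀ x y, (x, y) ∈ W → ∀ t, 0 < t →
      Tt x y t = ε * (T₁₁ x y t + T₂₂ x y t)
        - (v₁ x y t * T₁ x y t + v₂ x y t * T₂ x y t)
        + A * (S x y t * rt γ (T x y t - Ta) - C * (T x y t - Ta)))
    (hSdot : ∀ x y, (x, y) ∈ W → ∀ t, 0 < t →
      HasDerivAt (fun τ => S x y τ) (-CS * S x y t * rt γ (T x y t - Ta)) t)
    -- initial data
    (hT0 : ∀ x y, T x y 0 = T₀ x y) (hS0 : ∀ x y, S x y 0 = S₀ x y)
    (hS0b : ∀ x y, (x, y) ∈ W → 0 ≤ S₀ x y ∧ S₀ x y ≤ 1)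
    -- fuel bound: 0 ≤ S(x,t) ≤ S₀(x) on W × [0,∞)
    (hSb : ∀ x y, (x, y) ∈ W → ∀ t, 0 ≤ t → 0 ≤ S x y t ∧ S x y t ≤ S₀ x y)
    -- the constants R₁, R₂, 𝒱, sup S₀, α and the energy B
    (R₁ R₂ Vs MS₀ α : ℝ) (B : ℝ → ℝ)
    (hR₁ : R₁ = sSup ((fun p : ℝ × ℝ => p.1 ^ 2 + p.2 ^ 2) '' W))
    (hR₂ : R₂ = sSup ((fun p : ℝ × ℝ => Real.sqrt (p.1 ^ 2 + p.2 ^ 2)) '' bW))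
    (hVs : Vs = sSup ((fun q : (ℝ × ℝ) × ℝ =>
      |dv₁ q.1.1 q.1.2 q.2 + dv₂ q.1.1 q.1.2 q.2|) '' (W ×ˢ Ioi (0 : ℝ))))
    (hVbdd : BddAbove ((fun q : (ℝ × ℝ) × ℝ =>
      |dv₁ q.1.1 q.1.2 q.2 + dv₂ q.1.1 q.1.2 q.2|) '' (W ×ˢ Ioi (0 : ℝ))))
    (hMS₀ : MS₀ = sSup ((fun p : ℝ × ℝ => S₀ p.1 p.2) '' W))
    (hα : α = 2 * A * C + 2 * ε / R₁ - Vs - (2 * A * Real.exp (-1) / γ) * MS₀)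
    (hB : B = fun t => (1 / 2) * ∫ x in a₁..b₁, ∫ y in a₂..b₂, (T x y t - Ta) ^ 2)
    -- control gain and feedback boundary condition ∂T/∂n = ((n·v − 2k)/(2ε) − 2R₂/R₁)·(T − T_a)
    (k : ℝ) (hk : 0 ≤ k)
    -- Assumption 1
    (hα0 : 0 < α)
    (hbcl : ∀ y ∈ Icc a₂ b₂, ∀ t, 0 < t →
      -T₁ a₁ y t = ((-v₁ a₁ y t - 2 * k) / (2 * ε) - 2 * R₂ / R₁) * (T a₁ y t - Ta))
    (hbcr : ∀ y ∈ Icc a₂ b₂, ∀ t, 0 < t →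
      T₁ b₁ y t = ((v₁ b₁ y t - 2 * k) / (2 * ε) - 2 * R₂ / R₁) * (T b₁ y t - Ta))
    (hbcb : ∀ x ∈ Icc a₁ b₁, ∀ t, 0 < t →
      -T₂ x a₂ t = ((-v₂ x a₂ t - 2 * k) / (2 * ε) - 2 * R₂ / R₁) * (T x a₂ t - Ta))
    (hbct : ∀ x ∈ Icc a₁ b₁, ∀ t, 0 < t →
      T₂ x b₂ t = ((v₂ x b₂ t - 2 * k) / (2 * ε) - 2 * R₂ / R₁) * (T x b₂ t - Ta)) :
    ∀ t, 0 ≤ t →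
      (∫ x in a₁..b₁, ∫ y in a₂..b₂, (T x y t - Ta) ^ 2)
        ≤ Real.exp (-α * t) * ∫ x in a₁..b₁, ∫ y in a₂..b₂, (T₀ x y - Ta) ^ 2 := by
  -- ### basic facts
  have hab1 : a₁ ≤ b₁ := le_of_lt ha
  have hab2 : a₂ ≤ b₂ := le_of_lt hb
  have hmemW : ∀ x y, x ∈ Icc a₁ b₁ → y ∈ Icc a₂ b₂ → (x, y) ∈ W := by
    intro x y hx hy; rw [hW]; exact ⟨hx, hy⟩
  have hWcpt : IsCompact W := by rw [hW]; exact isCompact_Icc.prod isCompact_Icc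
  -- R₁ facts
  have hR₁bdd : BddAbove ((fun p : ℝ × ℝ => p.1 ^ 2 + p.2 ^ 2) '' W) :=
    hWcpt.bddAbove_image (by fun_prop)
  have hR1xy : ∀ x y, (x, y) ∈ W → x ^ 2 + y ^ 2 ≤ R₁ := by
    intro x y hxy; rw [hR₁]; exact le_csSup hR₁bdd ⟨(x, y), hxy, rfl⟩
  have hR₁pos : 0 < R₁ := by
    have h1 := hR1xy a₁ a₂ (hmemW _ _ ⟨le_refl _, hab1⟩ ⟨le_refl _, hab2⟩)
    have h2 := hR1xy b₁ a₂ (hmemW _ _ ⟨hab1, le_refl _⟩ ⟨le_refl _, hab2⟩)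
    nlinarith [sq_nonneg a₂, mul_pos (sub_pos.2 ha) (sub_pos.2 ha)]
  -- R₂ facts
  have hbWcpt : IsCompact bW := by
    rw [hbW]
    exact (((Set.finite_singleton b₁).insert a₁).isCompact.prod isCompact_Icc).union
      (isCompact_Icc.prod ((Set.finite_singleton b₂).insert a₂).isCompact)
  have hbWbdd : BddAbove ((fun p : ℝ × ℝ => Real.sqrt (p.1 ^ 2 + p.2 ^ 2)) '' bW) :=
    hbWcpt.bddAbove_image (by fun_prop)
  have hcorner : ∀ p ∈ bW, Real.sqrt (p.1 ^ 2 + p.2 ^ 2) ≤ R₂ := by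
    intro p hp; rw [hR₂]; exact le_csSup hbWbdd ⟨p, hp, rfl⟩
  have habs : ∀ x y : ℝ, |x| ≤ Real.sqrt (x ^ 2 + y ^ 2) := by
    intro x y
    rw [← Real.sqrt_sq_eq_abs]
    exact Real.sqrt_le_sqrt (by nlinarith [sq_nonneg y])
  have hb1R2 : b₁ ≤ R₂ := by
    have := hcorner (b₁, a₂) (by rw [hbW]; exact Or.inl ⟨by simp, ⟨le_refl _, hab2⟩⟩)
    have h2 := habs b₁ a₂
    calc b₁ ≤ |b₁| := le_abs_self _
      _ ≤ R₂ := le_trans h2 this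
  have ha1R2 : -a₁ ≤ R₂ := by
    have := hcorner (a₁, a₂) (by rw [hbW]; exact Or.inl ⟨by simp, ⟨le_refl _, hab2⟩⟩)
    have h2 := habs a₁ a₂
    calc -a₁ ≤ |a₁| := neg_le_abs _
      _ ≤ R₂ := le_trans h2 this
  have hb2R2 : b₂ ≤ R₂ := by
    have := hcorner (a₁, b₂) (by rw [hbW]; exact Or.inl ⟨by simp, ⟨hab2, le_refl _⟩⟩)
    have h2 := habs b₂ a₁
    calc b₂ ≤ |b₂| := le_abs_self _
      _ ≤ R₂ := le_trans (by simpa [add_comm] using h2) this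
  have ha2R2 : -a₂ ≤ R₂ := by
    have := hcorner (a₁, a₂) (by rw [hbW]; exact Or.inl ⟨by simp, ⟨le_refl _, hab2⟩⟩)
    have h2 := habs a₂ a₁
    calc -a₂ ≤ |a₂| := neg_le_abs _
      _ ≤ R₂ := le_trans (by simpa [add_comm] using h2) this
  have hR₂0 : 0 ≤ R₂ := by linarith
  -- Vs and MS₀ facts
  have hVsle : ∀ x y t, (x, y) ∈ W → 0 < t → |dv₁ x y t + dv₂ x y t| ≤ Vs := by
    intro x y t hxy ht; rw [hVs]
    exact le_csSup hVbdd ⟨((x, y), t), ⟨hxy, ht⟩, rfl⟩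
  have hMS₀bdd : BddAbove ((fun p : ℝ × ℝ => S₀ p.1 p.2) '' W) := by
    refine ⟨1, ?_⟩
    rintro z ⟨p, hp, rfl⟩
    exact (hS0b p.1 p.2 hp).2
  have hS0M : ∀ x y, (x, y) ∈ W → S₀ x y ≤ MS₀ := by
    intro x y hxy; rw [hMS₀]; exact le_csSup hMS₀bdd ⟨(x, y), hxy, rfl⟩
  have hMS₀0 : 0 ≤ MS₀ := by
    have hm := hmemW a₁ a₂ ⟨le_refl _, hab1⟩ ⟨le_refl _, hab2⟩
    exact le_trans (hS0b a₁ a₂ hm).1 (hS0M a₁ a₂ hm)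
  -- clamping maps
  set c1 : ℝ → ℝ := fun x => max a₁ (min b₁ x) with hc1def
  set c2 : ℝ → ℝ := fun y => max a₂ (min b₂ y) with hc2def
  set c3 : ℝ → ℝ := fun t => max t 0 with hc3def
  have hc1c : Continuous c1 := continuous_const.max (continuous_const.min continuous_id)
  have hc2c : Continuous c2 := continuous_const.max (continuous_const.min continuous_id)
  have hc3c : Continuous c3 := continuous_id.max continuous_const
  have hc1m : ∀ x, c1 x ∈ Icc a₁ b₁ :=
    fun x => ⟨le_max_left _ _, max_le hab1 (min_le_left _ _)⟩
  have hc2m : ∀ y, c2 y ∈ Icc a₂ b₂ :=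
    fun y => ⟨le_max_left _ _, max_le hab2 (min_le_left _ _)⟩
  have hc3m : ∀ t, c3 t ∈ Ici (0:ℝ) := fun t => show (0:ℝ) ≤ max t 0 from le_max_right _ _
  have hc1e : ∀ x, x ∈ Icc a₁ b₁ → c1 x = x := by
    intro x hx; rw [hc1def]; simp only; rw [min_eq_right hx.2, max_eq_right hx.1]
  have hc2e : ∀ y, y ∈ Icc a₂ b₂ → c2 y = y := by
    intro y hy; rw [hc2def]; simp only; rw [min_eq_right hy.2, max_eq_right hy.1]
  have hc3e : ∀ t : ℝ, 0 ≤ t → c3 t = t := by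
    intro t ht; rw [hc3def]; simp only; exact max_eq_left ht
  -- clamped continuity
  have hclamp : ∀ f : ℝ → ℝ → ℝ → ℝ,
      ContinuousOn (fun q : (ℝ × ℝ) × ℝ => f q.1.1 q.1.2 q.2) (W ×ˢ Ici (0:ℝ)) →
      Continuous (fun q : (ℝ × ℝ) × ℝ => f (c1 q.1.1) (c2 q.1.2) (c3 q.2)) := by
    intro f hf
    have hg : Continuous (fun q : (ℝ × ℝ) × ℝ => ((c1 q.1.1, c2 q.1.2), c3 q.2)) :=
      ((hc1c.comp (continuous_fst.comp continuous_fst)).prodMk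
        (hc2c.comp (continuous_snd.comp continuous_fst))).prodMk (hc3c.comp continuous_snd)
    exact hf.comp_continuous hg (fun q => ⟨hmemW _ _ (hc1m _) (hc2m _), hc3m _⟩)
  -- slice continuity
  have hsliceY : ∀ f : ℝ → ℝ → ℝ → ℝ,
      ContinuousOn (fun q : (ℝ × ℝ) × ℝ => f q.1.1 q.1.2 q.2) (W ×ˢ Ici (0:ℝ)) →
      ∀ x t, x ∈ Icc a₁ b₁ → 0 ≤ t → ContinuousOn (fun y => f x y t) (Icc a₂ b₂) := by
    intro f hf x t hx ht
    have hm : Continuous (fun y : ℝ => (((x, y), t) : (ℝ × ℝ) × ℝ)) := by fun_prop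
    exact ContinuousOn.comp hf hm.continuousOn (fun y hy => ⟨hmemW x y hx hy, ht⟩)
  have hsliceX : ∀ f : ℝ → ℝ → ℝ → ℝ,
      ContinuousOn (fun q : (ℝ × ℝ) × ℝ => f q.1.1 q.1.2 q.2) (W ×ˢ Ici (0:ℝ)) →
      ∀ y t, y ∈ Icc a₂ b₂ → 0 ≤ t → ContinuousOn (fun x => f x y t) (Icc a₁ b₁) := by
    intro f hf y t hy ht
    have hm : Continuous (fun x : ℝ => (((x, y), t) : (ℝ × ℝ) × ℝ)) := by fun_prop
    exact ContinuousOn.comp hf hm.continuousOn (fun x hx => ⟨hmemW x y hx hy, ht⟩)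
  -- ### local definitions
  set β : ℝ := 2 * ε / R₁ with hβdef
  have hβ0 : 0 ≤ β := by rw [hβdef]; positivity
  have hβR : β * R₁ = 2 * ε := by rw [hβdef]; field_simp
  set cγ : ℝ := 2 * A * Real.exp (-1) / γ with hcγdef
  set U : ℝ → ℝ → ℝ → ℝ := fun x y t => (T x y t - Ta) ^ 2 with hUdef
  set P : ℝ → ℝ → ℝ → ℝ := fun x y t => 2 * (T x y t - Ta) * Tt x y t with hPdef
  set F1 : ℝ → ℝ → ℝ → ℝ := fun x y t =>
    2 * ε * (T x y t - Ta) * T₁ x y t - v₁ x y t * (T x y t - Ta) ^ 2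
      + β * (x * (T x y t - Ta) ^ 2) with hF1def
  set F2 : ℝ → ℝ → ℝ → ℝ := fun x y t =>
    2 * ε * (T x y t - Ta) * T₂ x y t - v₂ x y t * (T x y t - Ta) ^ 2
      + β * (y * (T x y t - Ta) ^ 2) with hF2def
  set G1 : ℝ → ℝ → ℝ → ℝ := fun x y t =>
    2 * ε * T₁ x y t ^ 2 + 2 * ε * (T x y t - Ta) * T₁₁ x y t
      - dv₁ x y t * (T x y t - Ta) ^ 2 - 2 * v₁ x y t * (T x y t - Ta) * T₁ x y t
      + β * ((T x y t - Ta) ^ 2 + 2 * x * (T x y t - Ta) * T₁ x y t) with hG1def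
  set G2 : ℝ → ℝ → ℝ → ℝ := fun x y t =>
    2 * ε * T₂ x y t ^ 2 + 2 * ε * (T x y t - Ta) * T₂₂ x y t
      - dv₂ x y t * (T x y t - Ta) ^ 2 - 2 * v₂ x y t * (T x y t - Ta) * T₂ x y t
      + β * ((T x y t - Ta) ^ 2 + 2 * y * (T x y t - Ta) * T₂ x y t) with hG2def
  set EE : ℝ → ℝ := fun t => ∫ x in a₁..b₁, ∫ y in a₂..b₂, U x y t with hEEdef
  set DE : ℝ → ℝ := fun t => ∫ x in a₁..b₁, ∫ y in a₂..b₂, P x y t with hDEdef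
  -- base continuity handles
  have hcT := hcont T (by simp)
  have hcv₁ := hcont v₁ (by simp)
  have hcv₂ := hcont v₂ (by simp)
  have hcT₁ := hcont T₁ (by simp)
  have hcT₂ := hcont T₂ (by simp)
  have hcT₁₁ := hcont T₁₁ (by simp)
  have hcT₂₂ := hcont T₂₂ (by simp)
  have hcTt := hcont Tt (by simp)
  have hcdv₁ := hcont dv₁ (by simp)
  have hcdv₂ := hcont dv₂ (by simp)
  -- slice continuity of the integrands
  have hUy : ∀ x t, x ∈ Icc a₁ b₁ → 0 ≤ t →
      ContinuousOn (fun y => U x y t) (Icc a₂ b₂) := by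
    intro x t hx ht
    simp only [hUdef]
    exact ((hsliceY T hcT x t hx ht).sub continuousOn_const).pow 2
  have hPy : ∀ x t, x ∈ Icc a₁ b₁ → 0 ≤ t →
      ContinuousOn (fun y => P x y t) (Icc a₂ b₂) := by
    intro x t hx ht
    simp only [hPdef]
    exact (continuousOn_const.mul ((hsliceY T hcT x t hx ht).sub continuousOn_const)).mul
      (hsliceY Tt hcTt x t hx ht)
  have hG1y : ∀ x t, x ∈ Icc a₁ b₁ → 0 ≤ t →
      ContinuousOn (fun y => G1 x y t) (Icc a₂ b₂) := by
    intro x t hx ht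
    have cu := (hsliceY T hcT x t hx ht).sub (continuousOn_const (c := Ta))
    simp only [hG1def]
    exact ((((continuousOn_const.mul ((hsliceY T₁ hcT₁ x t hx ht).pow 2)).add
      ((continuousOn_const.mul cu).mul (hsliceY T₁₁ hcT₁₁ x t hx ht))).sub
      ((hsliceY dv₁ hcdv₁ x t hx ht).mul (cu.pow 2))).sub
      (((continuousOn_const.mul (hsliceY v₁ hcv₁ x t hx ht)).mul cu).mul
        (hsliceY T₁ hcT₁ x t hx ht))).add
      (continuousOn_const.mul ((cu.pow 2).add
        (((continuousOn_const.mul cu)).mul (hsliceY T₁ hcT₁ x t hx ht))))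
  have hG2y : ∀ x t, x ∈ Icc a₁ b₁ → 0 ≤ t →
      ContinuousOn (fun y => G2 x y t) (Icc a₂ b₂) := by
    intro x t hx ht
    have cu := (hsliceY T hcT x t hx ht).sub (continuousOn_const (c := Ta))
    simp only [hG2def]
    exact ((((continuousOn_const.mul ((hsliceY T₂ hcT₂ x t hx ht).pow 2)).add
      ((continuousOn_const.mul cu).mul (hsliceY T₂₂ hcT₂₂ x t hx ht))).sub
      ((hsliceY dv₂ hcdv₂ x t hx ht).mul (cu.pow 2))).sub
      (((continuousOn_const.mul (hsliceY v₂ hcv₂ x t hx ht)).mul cu).mul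
        (hsliceY T₂ hcT₂ x t hx ht))).add
      (continuousOn_const.mul ((cu.pow 2).add
        (((continuousOn_const.mul continuousOn_id).mul cu).mul
          (hsliceY T₂ hcT₂ x t hx ht))))
  have hG1x : ∀ y t, y ∈ Icc a₂ b₂ → 0 ≤ t →
      ContinuousOn (fun x => G1 x y t) (Icc a₁ b₁) := by
    intro y t hy ht
    have cu := (hsliceX T hcT y t hy ht).sub (continuousOn_const (c := Ta))
    simp only [hG1def]
    exact ((((continuousOn_const.mul ((hsliceX T₁ hcT₁ y t hy ht).pow 2)).add
      ((continuousOn_const.mul cu).mul (hsliceX T₁₁ hcT₁₁ y t hy ht))).sub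
      ((hsliceX dv₁ hcdv₁ y t hy ht).mul (cu.pow 2))).sub
      (((continuousOn_const.mul (hsliceX v₁ hcv₁ y t hy ht)).mul cu).mul
        (hsliceX T₁ hcT₁ y t hy ht))).add
      (continuousOn_const.mul ((cu.pow 2).add
        (((continuousOn_const.mul continuousOn_id).mul cu).mul
          (hsliceX T₁ hcT₁ y t hy ht))))
  -- clamped integrands
  set cU : ℝ → ℝ → ℝ → ℝ := fun x y t => (T (c1 x) (c2 y) (c3 t) - Ta) ^ 2 with hcUdef
  set cP : ℝ → ℝ → ℝ → ℝ := fun x y t =>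
    2 * (T (c1 x) (c2 y) (c3 t) - Ta) * Tt (c1 x) (c2 y) (c3 t) with hcPdef
  set cG1 : ℝ → ℝ → ℝ → ℝ := fun x y t =>
    2 * ε * T₁ (c1 x) (c2 y) (c3 t) ^ 2
      + 2 * ε * (T (c1 x) (c2 y) (c3 t) - Ta) * T₁₁ (c1 x) (c2 y) (c3 t)
      - dv₁ (c1 x) (c2 y) (c3 t) * (T (c1 x) (c2 y) (c3 t) - Ta) ^ 2
      - 2 * v₁ (c1 x) (c2 y) (c3 t) * (T (c1 x) (c2 y) (c3 t) - Ta) * T₁ (c1 x) (c2 y) (c3 t)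
      + β * ((T (c1 x) (c2 y) (c3 t) - Ta) ^ 2
        + 2 * c1 x * (T (c1 x) (c2 y) (c3 t) - Ta) * T₁ (c1 x) (c2 y) (c3 t)) with hcG1def
  set cG2 : ℝ → ℝ → ℝ → ℝ := fun x y t =>
    2 * ε * T₂ (c1 x) (c2 y) (c3 t) ^ 2
      + 2 * ε * (T (c1 x) (c2 y) (c3 t) - Ta) * T₂₂ (c1 x) (c2 y) (c3 t)
      - dv₂ (c1 x) (c2 y) (c3 t) * (T (c1 x) (c2 y) (c3 t) - Ta) ^ 2
      - 2 * v₂ (c1 x) (c2 y) (c3 t) * (T (c1 x) (c2 y) (c3 t) - Ta) * T₂ (c1 x) (c2 y) (c3 t)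
      + β * ((T (c1 x) (c2 y) (c3 t) - Ta) ^ 2
        + 2 * c2 y * (T (c1 x) (c2 y) (c3 t) - Ta) * T₂ (c1 x) (c2 y) (c3 t)) with hcG2def
  have hqT := hclamp T hcT
  have hqTt := hclamp Tt hcTt
  have hqT₁ := hclamp T₁ hcT₁
  have hqT₂ := hclamp T₂ hcT₂
  have hqT₁₁ := hclamp T₁₁ hcT₁₁
  have hqT₂₂ := hclamp T₂₂ hcT₂₂
  have hqv₁ := hclamp v₁ hcv₁
  have hqv₂ := hclamp v₂ hcv₂
  have hqdv₁ := hclamp dv₁ hcdv₁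
  have hqdv₂ := hclamp dv₂ hcdv₂
  have hqc1 : Continuous (fun q : (ℝ × ℝ) × ℝ => c1 q.1.1) :=
    hc1c.comp (continuous_fst.comp continuous_fst)
  have hqc2 : Continuous (fun q : (ℝ × ℝ) × ℝ => c2 q.1.2) :=
    hc2c.comp (continuous_snd.comp continuous_fst)
  have hcUq : Continuous (fun q : (ℝ × ℝ) × ℝ => cU q.1.1 q.1.2 q.2) := by
    simp only [hcUdef]
    exact (hqT.sub continuous_const).pow 2
  have hcPq : Continuous (fun q : (ℝ × ℝ) × ℝ => cP q.1.1 q.1.2 q.2) := by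
    simp only [hcPdef]
    exact (continuous_const.mul (hqT.sub continuous_const)).mul hqTt
  have hcG1q : Continuous (fun q : (ℝ × ℝ) × ℝ => cG1 q.1.1 q.1.2 q.2) := by
    have cu := hqT.sub (continuous_const (y := Ta))
    simp only [hcG1def]
    exact ((((continuous_const.mul (hqT₁.pow 2)).add
      ((continuous_const.mul cu).mul hqT₁₁)).sub (hqdv₁.mul (cu.pow 2))).sub
      (((continuous_const.mul hqv₁).mul cu).mul hqT₁)).add
      (continuous_const.mul ((cu.pow 2).add
        (((continuous_const.mul hqc1).mul cu).mul hqT₁)))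
  have hcG2q : Continuous (fun q : (ℝ × ℝ) × ℝ => cG2 q.1.1 q.1.2 q.2) := by
    have cu := hqT.sub (continuous_const (y := Ta))
    simp only [hcG2def]
    exact ((((continuous_const.mul (hqT₂.pow 2)).add
      ((continuous_const.mul cu).mul hqT₂₂)).sub (hqdv₂.mul (cu.pow 2))).sub
      (((continuous_const.mul hqv₂).mul cu).mul hqT₂)).add
      (continuous_const.mul ((cu.pow 2).add
        (((continuous_const.mul hqc2).mul cu).mul hqT₂)))
  have hcUeq : ∀ x y t, x ∈ Icc a₁ b₁ → y ∈ Icc a₂ b₂ → 0 ≤ t → cU x y t = U x y t := by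
    intro x y t hx hy ht
    simp only [hcUdef, hUdef, hc1e x hx, hc2e y hy, hc3e t ht]
  have hcPeq : ∀ x y t, x ∈ Icc a₁ b₁ → y ∈ Icc a₂ b₂ → 0 ≤ t → cP x y t = P x y t := by
    intro x y t hx hy ht
    simp only [hcPdef, hPdef, hc1e x hx, hc2e y hy, hc3e t ht]
  have hcG1eq : ∀ x y t, x ∈ Icc a₁ b₁ → y ∈ Icc a₂ b₂ → 0 ≤ t → cG1 x y t = G1 x y t := by
    intro x y t hx hy ht
    simp only [hcG1def, hG1def, hc1e x hx, hc2e y hy, hc3e t ht]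
  have hcG2eq : ∀ x y t, x ∈ Icc a₁ b₁ → y ∈ Icc a₂ b₂ → 0 ≤ t → cG2 x y t = G2 x y t := by
    intro x y t hx hy ht
    simp only [hcG2def, hG2def, hc1e x hx, hc2e y hy, hc3e t ht]
  -- outer continuity helper
  have hOuter : ∀ f cf : ℝ → ℝ → ℝ → ℝ,
      Continuous (fun q : (ℝ × ℝ) × ℝ => cf q.1.1 q.1.2 q.2) →
      (∀ x y t, x ∈ Icc a₁ b₁ → y ∈ Icc a₂ b₂ → 0 ≤ t → cf x y t = f x y t) →
      ∀ t : ℝ, 0 ≤ t →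
      ContinuousOn (fun x => ∫ y in a₂..b₂, f x y t) (Icc a₁ b₁) := by
    intro f cf hcf heq t ht
    have hcont2 : Continuous fun x => ∫ y in a₂..b₂, cf x y t := by
      apply my_param_cont (f := fun x y => cf x y t)
      have hm : Continuous (fun p : ℝ × ℝ => ((p, t) : (ℝ × ℝ) × ℝ)) :=
        continuous_id.prodMk continuous_const
      exact hcf.comp hm
    refine hcont2.continuousOn.congr ?_
    intro x hx
    refine intervalIntegral.integral_congr ?_
    intro y hy
    rw [uIcc_of_le hab2] at hy
    exact (heq x y t hx hy ht).symm
  -- ### pointwise inequality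
  have hpoint : ∀ x y, (x, y) ∈ W → ∀ t, 0 < t →
      P x y t + α * U x y t ≤ G1 x y t + G2 x y t := by
    intro x y hxy t ht
    have hxy' : x ∈ Icc a₁ b₁ ∧ y ∈ Icc a₂ b₂ := by rw [hW] at hxy; exact ⟨hxy.1, hxy.2⟩
    have hTteq := hPDE x y hxy t ht
    have hSb' := hSb x y hxy t ht.le
    have hreact : 2 * A * (S x y t * rt γ (T x y t - Ta) * (T x y t - Ta)) ≤
        2 * A * (MS₀ * Real.exp (-1) / γ * (T x y t - Ta) ^ 2) :=
      mul_le_mul_of_nonneg_left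
        (rt_mul_le hγ hSb'.1 (le_trans hSb'.2 (hS0M x y hxy)) hMS₀0)
        (by positivity)
    have hdiv : dv₁ x y t + dv₂ x y t ≤ Vs :=
      le_trans (le_abs_self _) (hVsle x y t hxy ht)
    have f2 : (dv₁ x y t + dv₂ x y t) * (T x y t - Ta) ^ 2 ≤ Vs * (T x y t - Ta) ^ 2 :=
      mul_le_mul_of_nonneg_right hdiv (sq_nonneg _)
    have hR1' := hR1xy x y hxy
    have h3' : 0 ≤ R₁ * (T₁ x y t ^ 2 + T₂ x y t ^ 2) + (T x y t - Ta) ^ 2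
        + 2 * (T x y t - Ta) * (x * T₁ x y t + y * T₂ x y t) := by
      linarith [sq_nonneg (x * T₁ x y t + y * T₂ x y t + (T x y t - Ta)),
        sq_nonneg (x * T₂ x y t - y * T₁ x y t),
        mul_nonneg (sub_nonneg.2 hR1')
          (add_nonneg (sq_nonneg (T₁ x y t)) (sq_nonneg (T₂ x y t)))]
    have h4 : 0 ≤ β * (R₁ * (T₁ x y t ^ 2 + T₂ x y t ^ 2) + (T x y t - Ta) ^ 2
        + 2 * (T x y t - Ta) * (x * T₁ x y t + y * T₂ x y t)) := mul_nonneg hβ0 h3'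
    have h5 : β * R₁ * (T₁ x y t ^ 2 + T₂ x y t ^ 2)
        = 2 * ε * (T₁ x y t ^ 2 + T₂ x y t ^ 2) := by rw [hβR]
    have f3 : 0 ≤ 2 * ε * (T₁ x y t ^ 2 + T₂ x y t ^ 2) + β * (T x y t - Ta) ^ 2
        + 2 * β * (T x y t - Ta) * (x * T₁ x y t + y * T₂ x y t) := by linarith [h4, h5]
    have hreact' : 2 * A * (S x y t * rt γ (T x y t - Ta) * (T x y t - Ta)) ≤
        cγ * MS₀ * (T x y t - Ta) ^ 2 := by
      refine le_trans hreact (le_of_eq ?_); rw [hcγdef]; ring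
    simp only [hPdef, hUdef, hG1def, hG2def]
    rw [hTteq, hα]
    linarith [hreact', f2, f3]
  -- ### edge sign conditions
  have hε' : (ε : ℝ) ≠ 0 := ne_of_gt hε
  have hR₁' : R₁ ≠ 0 := ne_of_gt hR₁pos
  have hedge1R : ∀ y ∈ Icc a₂ b₂, ∀ t, 0 < t → F1 b₁ y t ≤ 0 := by
    intro y hy t ht
    have hbc := hbcr y hy t ht
    have hkey : F1 b₁ y t = -(2 * k) * (T b₁ y t - Ta) ^ 2
        - β * (2 * R₂ - b₁) * (T b₁ y t - Ta) ^ 2 := by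
      simp only [hF1def]; rw [hbc, hβdef]; field_simp; ring
    rw [hkey]
    nlinarith [mul_nonneg (mul_nonneg hβ0 (by linarith : (0:ℝ) ≤ 2 * R₂ - b₁))
      (sq_nonneg (T b₁ y t - Ta)), mul_nonneg hk (sq_nonneg (T b₁ y t - Ta))]
  have hedge1L : ∀ y ∈ Icc a₂ b₂, ∀ t, 0 < t → 0 ≤ F1 a₁ y t := by
    intro y hy t ht
    have hbc := hbcl y hy t ht
    have hbc' : T₁ a₁ y t = -(((-v₁ a₁ y t - 2 * k) / (2 * ε) - 2 * R₂ / R₁)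
        * (T a₁ y t - Ta)) := by linarith [hbc]
    have hkey : F1 a₁ y t = (2 * k) * (T a₁ y t - Ta) ^ 2
        + β * (2 * R₂ + a₁) * (T a₁ y t - Ta) ^ 2 := by
      simp only [hF1def]; rw [hbc', hβdef]; field_simp; ring
    rw [hkey]
    nlinarith [mul_nonneg (mul_nonneg hβ0 (by linarith : (0:ℝ) ≤ 2 * R₂ + a₁))
      (sq_nonneg (T a₁ y t - Ta)), mul_nonneg hk (sq_nonneg (T a₁ y t - Ta))]
  have hedge2T : ∀ x ∈ Icc a₁ b₁, ∀ t, 0 < t → F2 x b₂ t ≤ 0 := by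
    intro x hx t ht
    have hbc := hbct x hx t ht
    have hkey : F2 x b₂ t = -(2 * k) * (T x b₂ t - Ta) ^ 2
        - β * (2 * R₂ - b₂) * (T x b₂ t - Ta) ^ 2 := by
      simp only [hF2def]; rw [hbc, hβdef]; field_simp; ring
    rw [hkey]
    nlinarith [mul_nonneg (mul_nonneg hβ0 (by linarith : (0:ℝ) ≤ 2 * R₂ - b₂))
      (sq_nonneg (T x b₂ t - Ta)), mul_nonneg hk (sq_nonneg (T x b₂ t - Ta))]
  have hedge2B : ∀ x ∈ Icc a₁ b₁, ∀ t, 0 < t → 0 ≤ F2 x a₂ t := by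
    intro x hx t ht
    have hbc := hbcb x hx t ht
    have hbc' : T₂ x a₂ t = -(((-v₂ x a₂ t - 2 * k) / (2 * ε) - 2 * R₂ / R₁)
        * (T x a₂ t - Ta)) := by linarith [hbc]
    have hkey : F2 x a₂ t = (2 * k) * (T x a₂ t - Ta) ^ 2
        + β * (2 * R₂ + a₂) * (T x a₂ t - Ta) ^ 2 := by
      simp only [hF2def]; rw [hbc', hβdef]; field_simp; ring
    rw [hkey]
    nlinarith [mul_nonneg (mul_nonneg hβ0 (by linarith : (0:ℝ) ≤ 2 * R₂ + a₂))
      (sq_nonneg (T x a₂ t - Ta)), mul_nonneg hk (sq_nonneg (T x a₂ t - Ta))]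
  -- ### spatial derivatives of the fluxes
  have hdF1 : ∀ y t, 0 ≤ t → ∀ x, HasDerivAt (fun s => F1 s y t) (G1 x y t) x := by
    intro y t ht x
    have h1 := hT₁ x y t ht
    have h11 := hT₁₁ x y t ht
    have hv := hdv₁ x y t ht
    have hu : HasDerivAt (fun s => T s y t - Ta) (T₁ x y t) x := h1.sub_const Ta
    have hu2 : HasDerivAt (fun s => (T s y t - Ta) ^ 2)
        (2 * (T x y t - Ta) * T₁ x y t) x := by
      have := hu.pow 2
      norm_num at this
      exact this
    have hA1 : HasDerivAt (fun s => 2 * ε * (T s y t - Ta) * T₁ s y t)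
        (2 * ε * T₁ x y t * T₁ x y t + 2 * ε * (T x y t - Ta) * T₁₁ x y t) x := by
      have := (hu.const_mul (2 * ε)).mul h11
      exact this
    have hA2 : HasDerivAt (fun s => v₁ s y t * (T s y t - Ta) ^ 2)
        (dv₁ x y t * (T x y t - Ta) ^ 2
          + v₁ x y t * (2 * (T x y t - Ta) * T₁ x y t)) x := hv.mul hu2
    have hA3 : HasDerivAt (fun s => β * (s * (T s y t - Ta) ^ 2))
        (β * (1 * (T x y t - Ta) ^ 2 + x * (2 * (T x y t - Ta) * T₁ x y t))) x :=
      ((hasDerivAt_id x).mul hu2).const_mul β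
    have hfin := (hA1.sub hA2).add hA3
    simp only [hF1def, hG1def]
    refine hfin.congr_deriv ?_
    ring
  have hdF2 : ∀ x t, 0 ≤ t → ∀ y, HasDerivAt (fun s => F2 x s t) (G2 x y t) y := by
    intro x t ht y
    have h1 := hT₂ x y t ht
    have h11 := hT₂₂ x y t ht
    have hv := hdv₂ x y t ht
    have hu : HasDerivAt (fun s => T x s t - Ta) (T₂ x y t) y := h1.sub_const Ta
    have hu2 : HasDerivAt (fun s => (T x s t - Ta) ^ 2)
        (2 * (T x y t - Ta) * T₂ x y t) y := by
      have := hu.pow 2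
      norm_num at this
      exact this
    have hA1 : HasDerivAt (fun s => 2 * ε * (T x s t - Ta) * T₂ x s t)
        (2 * ε * T₂ x y t * T₂ x y t + 2 * ε * (T x y t - Ta) * T₂₂ x y t) y := by
      have := (hu.const_mul (2 * ε)).mul h11
      exact this
    have hA2 : HasDerivAt (fun s => v₂ x s t * (T x s t - Ta) ^ 2)
        (dv₂ x y t * (T x y t - Ta) ^ 2
          + v₂ x y t * (2 * (T x y t - Ta) * T₂ x y t)) y := hv.mul hu2
    have hA3 : HasDerivAt (fun s => β * (s * (T x s t - Ta) ^ 2))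
        (β * (1 * (T x y t - Ta) ^ 2 + y * (2 * (T x y t - Ta) * T₂ x y t))) y :=
      ((hasDerivAt_id y).mul hu2).const_mul β
    have hfin := (hA1.sub hA2).add hA3
    simp only [hF2def, hG2def]
    refine hfin.congr_deriv ?_
    ring
-- slice continuity of the fluxes
  have hF1ys : ∀ x t, x ∈ Icc a₁ b₁ → 0 ≤ t →
      ContinuousOn (fun y => F1 x y t) (Icc a₂ b₂) := by
    intro x t hx ht
    have cu := (hsliceY T hcT x t hx ht).sub (continuousOn_const (c := Ta))
    simp only [hF1def]
    exact (((continuousOn_const.mul cu).mul (hsliceY T₁ hcT₁ x t hx ht)).sub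
      ((hsliceY v₁ hcv₁ x t hx ht).mul (cu.pow 2))).add
      (continuousOn_const.mul (continuousOn_const.mul (cu.pow 2)))
  have hF2xs : ∀ y t, y ∈ Icc a₂ b₂ → 0 ≤ t →
      ContinuousOn (fun x => F2 x y t) (Icc a₁ b₁) := by
    intro y t hy ht
    have cu := (hsliceX T hcT y t hy ht).sub (continuousOn_const (c := Ta))
    simp only [hF2def]
    exact (((continuousOn_const.mul cu).mul (hsliceX T₂ hcT₂ y t hy ht)).sub
      ((hsliceX v₂ hcv₂ y t hy ht).mul (cu.pow 2))).add
      (continuousOn_const.mul (continuousOn_const.mul (cu.pow 2)))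
  -- ### interval integrability helpers
  have hIntY : ∀ (g : ℝ → ℝ), ContinuousOn g (Icc a₂ b₂) →
      IntervalIntegrable g volume a₂ b₂ := by
    intro g hg
    apply ContinuousOn.intervalIntegrable
    rwa [uIcc_of_le hab2]
  have hIntX : ∀ (g : ℝ → ℝ), ContinuousOn g (Icc a₁ b₁) →
      IntervalIntegrable g volume a₁ b₁ := by
    intro g hg
    apply ContinuousOn.intervalIntegrable
    rwa [uIcc_of_le hab1]
  -- ### main differential inequality
  have hmain : ∀ t, 0 < t → DE t ≤ -α * EE t := by
    intro t ht
    have ht0 : (0:ℝ) ≤ t := ht.le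
    -- inner integrability
    have iU : ∀ x ∈ Icc a₁ b₁, IntervalIntegrable (fun y => U x y t) volume a₂ b₂ :=
      fun x hx => hIntY _ (hUy x t hx ht0)
    have iP : ∀ x ∈ Icc a₁ b₁, IntervalIntegrable (fun y => P x y t) volume a₂ b₂ :=
      fun x hx => hIntY _ (hPy x t hx ht0)
    have iG1 : ∀ x ∈ Icc a₁ b₁, IntervalIntegrable (fun y => G1 x y t) volume a₂ b₂ :=
      fun x hx => hIntY _ (hG1y x t hx ht0)
    have iG2 : ∀ x ∈ Icc a₁ b₁, IntervalIntegrable (fun y => G2 x y t) volume a₂ b₂ :=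
      fun x hx => hIntY _ (hG2y x t hx ht0)
    -- outer integrability
    have oU : IntervalIntegrable (fun x => ∫ y in a₂..b₂, U x y t) volume a₁ b₁ :=
      hIntX _ (hOuter U cU hcUq hcUeq t ht0)
    have oP : IntervalIntegrable (fun x => ∫ y in a₂..b₂, P x y t) volume a₁ b₁ :=
      hIntX _ (hOuter P cP hcPq hcPeq t ht0)
    have oG1 : IntervalIntegrable (fun x => ∫ y in a₂..b₂, G1 x y t) volume a₁ b₁ :=
      hIntX _ (hOuter G1 cG1 hcG1q hcG1eq t ht0)
    have oG2 : IntervalIntegrable (fun x => ∫ y in a₂..b₂, G2 x y t) volume a₁ b₁ :=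
      hIntX _ (hOuter G2 cG2 hcG2q hcG2eq t ht0)
    -- step 1
    have s1 : DE t + α * EE t
        = ∫ x in a₁..b₁, ((∫ y in a₂..b₂, P x y t) + α * ∫ y in a₂..b₂, U x y t) := by
      simp only [hDEdef, hEEdef]
      rw [← intervalIntegral.integral_const_mul]
      exact (intervalIntegral.integral_add oP (oU.const_mul α)).symm
    -- step 2
    have s2 : (∫ x in a₁..b₁, ((∫ y in a₂..b₂, P x y t) + α * ∫ y in a₂..b₂, U x y t))
        ≤ ∫ x in a₁..b₁, ((∫ y in a₂..b₂, G1 x y t) + ∫ y in a₂..b₂, G2 x y t) := by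
      apply intervalIntegral.integral_mono_on hab1 (oP.add (oU.const_mul α)) (oG1.add oG2)
      intro x hx
      have e1 : (∫ y in a₂..b₂, P x y t) + α * ∫ y in a₂..b₂, U x y t
          = ∫ y in a₂..b₂, (P x y t + α * U x y t) := by
        rw [← intervalIntegral.integral_const_mul]
        exact (intervalIntegral.integral_add (iP x hx) ((iU x hx).const_mul α)).symm
      have e2 : (∫ y in a₂..b₂, G1 x y t) + ∫ y in a₂..b₂, G2 x y t
          = ∫ y in a₂..b₂, (G1 x y t + G2 x y t) := by
        exact (intervalIntegral.integral_add (iG1 x hx) (iG2 x hx)).symm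
      rw [e1, e2]
      apply intervalIntegral.integral_mono_on hab2
        ((iP x hx).add ((iU x hx).const_mul α)) ((iG1 x hx).add (iG2 x hx))
      intro y hy
      exact hpoint x y (hmemW x y hx hy) t ht
    -- split
    have s3 : (∫ x in a₁..b₁, ((∫ y in a₂..b₂, G1 x y t) + ∫ y in a₂..b₂, G2 x y t))
        = (∫ x in a₁..b₁, ∫ y in a₂..b₂, G1 x y t)
          + ∫ x in a₁..b₁, ∫ y in a₂..b₂, G2 x y t :=
      intervalIntegral.integral_add oG1 oG2
    -- the G2 term
    have s4 : (∫ x in a₁..b₁, ∫ y in a₂..b₂, G2 x y t) ≤ 0 := by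
      have e : ∀ x ∈ uIcc a₁ b₁,
          (∫ y in a₂..b₂, G2 x y t) = F2 x b₂ t - F2 x a₂ t := by
        intro x hx
        rw [uIcc_of_le hab1] at hx
        exact intervalIntegral.integral_eq_sub_of_hasDerivAt
          (fun y _ => hdF2 x t ht0 y) (iG2 x hx)
      rw [intervalIntegral.integral_congr e]
      have hle : (∫ x in a₁..b₁, (F2 x b₂ t - F2 x a₂ t))
          ≤ ∫ x in a₁..b₁, (0:ℝ) := by
        apply intervalIntegral.integral_mono_on hab1 ?_ intervalIntegrable_const
        · intro x hx
          have h1 := hedge2T x hx t ht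
          have h2 := hedge2B x hx t ht
          linarith
        · exact hIntX _ ((hF2xs b₂ t ⟨hab2, le_refl _⟩ ht0).sub
            (hF2xs a₂ t ⟨le_refl _, hab2⟩ ht0))
      simpa using hle
    -- the G1 term, via Fubini
    have s5 : (∫ x in a₁..b₁, ∫ y in a₂..b₂, G1 x y t) ≤ 0 := by
      have hswap : (∫ x in a₁..b₁, ∫ y in a₂..b₂, G1 x y t)
          = ∫ y in a₂..b₂, ∫ x in a₁..b₁, G1 x y t := by
        have h1 : (∫ x in a₁..b₁, ∫ y in a₂..b₂, G1 x y t)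
            = ∫ x in a₁..b₁, ∫ y in a₂..b₂, cG1 x y t := by
          apply intervalIntegral.integral_congr
          intro x hx
          rw [uIcc_of_le hab1] at hx
          apply intervalIntegral.integral_congr
          intro y hy
          rw [uIcc_of_le hab2] at hy
          exact (hcG1eq x y t hx hy ht0).symm
        have h2 : (∫ x in a₁..b₁, ∫ y in a₂..b₂, cG1 x y t)
            = ∫ y in a₂..b₂, ∫ x in a₁..b₁, cG1 x y t := by
          apply my_swap (f := fun x y => cG1 x y t) ?_ hab1 hab2
          have hm : Continuous (fun p : ℝ × ℝ => ((p, t) : (ℝ × ℝ) × ℝ)) :=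
            continuous_id.prodMk continuous_const
          exact hcG1q.comp hm
        have h3 : (∫ y in a₂..b₂, ∫ x in a₁..b₁, cG1 x y t)
            = ∫ y in a₂..b₂, ∫ x in a₁..b₁, G1 x y t := by
          apply intervalIntegral.integral_congr
          intro y hy
          rw [uIcc_of_le hab2] at hy
          apply intervalIntegral.integral_congr
          intro x hx
          rw [uIcc_of_le hab1] at hx
          exact hcG1eq x y t hx hy ht0
        rw [h1, h2, h3]
      rw [hswap]
      have e : ∀ y ∈ uIcc a₂ b₂,
          (∫ x in a₁..b₁, G1 x y t) = F1 b₁ y t - F1 a₁ y t := by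
        intro y hy
        rw [uIcc_of_le hab2] at hy
        exact intervalIntegral.integral_eq_sub_of_hasDerivAt
          (fun x _ => hdF1 y t ht0 x) (hIntX _ (hG1x y t hy ht0))
      rw [intervalIntegral.integral_congr e]
      have hle : (∫ y in a₂..b₂, (F1 b₁ y t - F1 a₁ y t))
          ≤ ∫ y in a₂..b₂, (0:ℝ) := by
        apply intervalIntegral.integral_mono_on hab2 ?_ intervalIntegrable_const
        · intro y hy
          have h1 := hedge1R y hy t ht
          have h2 := hedge1L y hy t ht
          linarith
        · exact hIntY _ ((hF1ys b₁ t ⟨hab1, le_refl _⟩ ht0).sub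
            (hF1ys a₁ t ⟨le_refl _, hab1⟩ ht0))
      simpa using hle
    linarith [s1, s2, s3, s4, s5]
  -- ### derivative of the energy
  have hsubY : Set.uIoc a₂ b₂ ⊆ Icc a₂ b₂ := by
    rw [uIoc_of_le hab2]; exact Ioc_subset_Icc_self
  have hsubX : Set.uIoc a₁ b₁ ⊆ Icc a₁ b₁ := by
    rw [uIoc_of_le hab1]; exact Ioc_subset_Icc_self
  have hEderiv : ∀ t, 0 < t → HasDerivAt EE (DE t) t := by
    intro t ht
    have ht0 : (0:ℝ) ≤ t := ht.le
    have hwin : ((Icc a₁ b₁ ×ˢ Icc a₂ b₂) ×ˢ Icc (t/2) (3*t) : Set ((ℝ × ℝ) × ℝ))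
        ⊆ W ×ˢ Ici 0 := by
      rintro ⟨⟨x, y⟩, τ⟩ ⟨⟨hx, hy⟩, hτ⟩
      exact ⟨hmemW x y hx hy, le_trans (by linarith) hτ.1⟩
    obtain ⟨M, hM⟩ : ∃ M, ∀ x y τ, x ∈ Icc a₁ b₁ → y ∈ Icc a₂ b₂ →
        τ ∈ Icc (t/2) (3*t) → ‖P x y τ‖ ≤ M := by
      have hcPon : ContinuousOn (fun q : (ℝ × ℝ) × ℝ => P q.1.1 q.1.2 q.2)
          ((Icc a₁ b₁ ×ˢ Icc a₂ b₂) ×ˢ Icc (t/2) (3*t)) := by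
        simp only [hPdef]
        exact (continuousOn_const.mul ((hcT.mono hwin).sub continuousOn_const)).mul
          (hcTt.mono hwin)
      obtain ⟨M, hM⟩ :=
        ((isCompact_Icc.prod isCompact_Icc).prod isCompact_Icc).exists_bound_of_continuousOn
          hcPon
      exact ⟨M, fun x y τ hx hy hτ => hM ((x, y), τ) ⟨⟨hx, hy⟩, hτ⟩⟩
    have hInner : ∀ x ∈ Icc a₁ b₁, ∀ τ ∈ Metric.ball t (t/2),
        HasDerivAt (fun σ => ∫ y in a₂..b₂, U x y σ) (∫ y in a₂..b₂, P x y τ) τ := by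
      intro x hx τ hτ
      rw [Metric.mem_ball, Real.dist_eq] at hτ
      obtain ⟨hd1, hd2⟩ := abs_lt.mp hτ
      have hτ1 : t/2 < τ := by linarith
      have hτ2 : τ < 3*t/2 := by linarith
      have hτpos : 0 < τ := by linarith
      have hrpos : 0 < τ - t/2 := by linarith
      have hball : ∀ σ ∈ Metric.ball τ (τ - t/2), σ ∈ Icc (t/2) (3*t) ∧ 0 < σ := by
        intro σ hσ
        rw [Metric.mem_ball, Real.dist_eq] at hσ
        obtain ⟨hσ1, hσ2⟩ := abs_lt.mp hσ
        exact ⟨⟨by linarith, by linarith⟩, by linarith⟩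
      refine (intervalIntegral.hasDerivAt_integral_of_dominated_loc_of_deriv_le
        (F := fun σ y => U x y σ) (F' := fun σ y => P x y σ) (x₀ := τ)
        (s := Metric.ball τ (τ - t/2)) (bound := fun _ => M) (Metric.ball_mem_nhds τ hrpos) ?_ ?_ ?_ ?_ ?_ ?_).2
      · filter_upwards [Ioi_mem_nhds hτpos] with σ hσ
        exact ((hUy x σ hx (le_of_lt hσ)).mono hsubY).aestronglyMeasurable measurableSet_uIoc
      · exact hIntY _ (hUy x τ hx hτpos.le)
      · exact ((hPy x τ hx hτpos.le).mono hsubY).aestronglyMeasurable measurableSet_uIoc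
      · refine MeasureTheory.ae_of_all _ ?_
        intro y hy σ hσ
        exact hM x y σ hx (hsubY hy) (hball σ hσ).1
      · exact intervalIntegrable_const
      · refine MeasureTheory.ae_of_all _ ?_
        intro y hy σ hσ
        have hσpos := (hball σ hσ).2
        simp only [hUdef, hPdef]
        have := ((hTt x y σ hσpos).sub_const Ta).pow 2
        norm_num at this
        exact this
    have houter := (intervalIntegral.hasDerivAt_integral_of_dominated_loc_of_deriv_le
      (F := fun τ x => ∫ y in a₂..b₂, U x y τ) (F' := fun τ x => ∫ y in a₂..b₂, P x y τ)
      (x₀ := t) (s := Metric.ball t (t/2)) (bound := fun _ => M * |b₂ - a₂|) (μ := volume)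
      (a := a₁) (b := b₁) (Metric.ball_mem_nhds t (half_pos ht)) ?_ ?_ ?_ ?_ ?_ ?_).2
    · simp only [hEEdef, hDEdef]
      exact houter
    · filter_upwards [Ioi_mem_nhds ht] with τ hτ
      exact ((hOuter U cU hcUq hcUeq τ (le_of_lt hτ)).mono hsubX).aestronglyMeasurable
        measurableSet_uIoc
    · exact hIntX _ (hOuter U cU hcUq hcUeq t ht0)
    · exact ((hOuter P cP hcPq hcPeq t ht0).mono hsubX).aestronglyMeasurable
        measurableSet_uIoc
    · refine MeasureTheory.ae_of_all _ ?_
      intro x hxI τ hτ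
      rw [Metric.mem_ball, Real.dist_eq] at hτ
      obtain ⟨hd1, hd2⟩ := abs_lt.mp hτ
      apply intervalIntegral.norm_integral_le_of_norm_le_const
      intro y hy
      exact hM x y τ (hsubX hxI) (hsubY hy) ⟨by linarith, by linarith⟩
    · exact intervalIntegrable_const
    · refine MeasureTheory.ae_of_all _ ?_
      intro x hxI τ hτ
      exact hInner x (hsubX hxI) τ hτ
  -- ### continuity of the energy
  have hEcont : ContinuousOn EE (Ici 0) := by
    have hin : Continuous (fun p : ℝ × ℝ => ∫ y in a₂..b₂, cU p.1 y p.2) := by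
      apply my_param_cont (f := fun (p : ℝ × ℝ) (y : ℝ) => cU p.1 y p.2)
      have hm : Continuous (fun z : (ℝ × ℝ) × ℝ => (((z.1.1, z.2), z.1.2) : (ℝ × ℝ) × ℝ)) := by
        fun_prop
      exact hcUq.comp hm
    have hcE : Continuous (fun τ => ∫ x in a₁..b₁, ∫ y in a₂..b₂, cU x y τ) := by
      apply my_param_cont (f := fun τ x => ∫ y in a₂..b₂, cU x y τ)
      have hm : Continuous (fun z : ℝ × ℝ => ((z.2, z.1) : ℝ × ℝ)) := by fun_prop
      exact hin.comp hm
    refine hcE.continuousOn.congr ?_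
    intro τ hτ
    simp only [hEEdef]
    apply intervalIntegral.integral_congr
    intro x hx
    rw [uIcc_of_le hab1] at hx
    apply intervalIntegral.integral_congr
    intro y hy
    rw [uIcc_of_le hab2] at hy
    exact (hcUeq x y τ hx hy hτ).symm
  -- ### conclusion via Gronwall
  intro t ht
  have hfin := my_gronwall hEcont hEderiv hmain t ht
  have hL : EE t = ∫ x in a₁..b₁, ∫ y in a₂..b₂, (T x y t - Ta) ^ 2 := by
    simp only [hEEdef, hUdef]
  have hR : EE 0 = ∫ x in a₁..b₁, ∫ y in a₂..b₂, (T₀ x y - Ta) ^ 2 := by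
    simp only [hEEdef, hUdef, hT0]
  rw [← hL, ← hR]
  exact hfin
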